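/- Existence of upper bounds for models: let p be odd, f ≥ 1, N = p^f - 1, e divisible by N. Suppose r_i, s_i ∈ [0,e] are integers with α_i := p(Σ_j p^{f-1-j} r_{i+j})/N and β_i := p(Σ_j p^{f-1-j} s_{i+j})/N satisfying β_i - α_i ∈ Z for all i. Define γ_i = max(α_i, β_i), n_i = (1/p)·max(0, β_i - α_i), and t_i = r_i + p·n_i - n_{i+1}. Then each n_i is an integer, t_i ∈ [0, e], and p(Σ_j p^{f-1-j} t_{i+j})/N = γ_i for all i. -/

import Mathlib

open Finset

lemma aux_shift (p m : ℕ) (u : ZMod (m+1) → ℚ) (i : ZMod (m+1)) :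
    (p:ℚ) * ∑ j ∈ range (m+1), (p:ℚ)^(m-j) * u (i + (j:ZMod (m+1))) =
    ((p:ℚ)^(m+1) - 1) * u i
      + ∑ j ∈ range (m+1), (p:ℚ)^(m-j) * u (i + 1 + (j:ZMod (m+1))) := by
  have h1 : (p:ℚ) * ∑ j ∈ range (m+1), (p:ℚ)^(m-j) * u (i + (j:ZMod (m+1)))
      = ∑ j ∈ range (m+1), (p:ℚ)^(m+1-j) * u (i + (j:ZMod (m+1))) := by
    rw [Finset.mul_sum]
    refine Finset.sum_congr rfl fun j hj => ?_
    rw [Finset.mem_range] at hj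
    have h2 : m + 1 - j = (m - j) + 1 := by omega
    rw [h2, pow_succ]; ring
  rw [h1, Finset.sum_range_succ' (fun j => (p:ℚ)^(m+1-j) * u (i + (j:ZMod (m+1)))) m,
    Finset.sum_range_succ (fun j => (p:ℚ)^(m-j) * u (i + 1 + (j:ZMod (m+1)))) m]
  have h3 : ∀ j, i + ((j+1 : ℕ) : ZMod (m+1)) = i + 1 + (j : ZMod (m+1)) := by
    intro j; push_cast; ring
  have h4 : i + 1 + ((m:ℕ) : ZMod (m+1)) = i := by
    have : ((m+1 : ℕ) : ZMod (m+1)) = 0 := ZMod.natCast_self _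
    push_cast at this ⊢
    linear_combination (norm := ring_nf) this
  have h5 : ∀ j ∈ range m, (p:ℚ)^(m+1-(j+1)) * u (i + ((j+1:ℕ) : ZMod (m+1)))
      = (p:ℚ)^(m-j) * u (i + 1 + (j : ZMod (m+1))) := by
    intro j hj
    rw [h3 j, Nat.succ_sub_succ]
  rw [Finset.sum_congr rfl h5, h4]
  simp
  ring

lemma aux_iter (f : ℕ) (c : ℚ) (x : ZMod f → ℚ) (hx : ∀ i, x (i+1) = c * x i) :
    ∀ (m : ℕ) (i : ZMod f), x (i + (m : ZMod f)) = c^m * x i := by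
  intro m
  induction m with
  | zero => simp
  | succ m ih =>
    intro i
    have : i + ((m+1 : ℕ) : ZMod f) = (i + (m : ZMod f)) + 1 := by push_cast; ring
    rw [this, hx, ih, pow_succ]; ring


/-- Existence of upper bounds for models: with `γ_i = max(α_i, β_i)`,
`n_i = max(0, β_i - α_i)/p` and `t_i = r_i + p n_i - n_{i+1}`, each `n_i` is an
integer, `t_i ∈ [0,e]`, and the `γ`-invariant of `t` equals `max(α_i, β_i)`. -/
theorem stmt_14 (p f e : ℕ) (hp : p.Prime) (hodd : Odd p) (hf : 1 ≤ f)
    (hdvd : (p ^ f - 1) ∣ e) (hepos : 0 < e)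
    (r s : ZMod f → ℤ)
    (hr : ∀ i, 0 ≤ r i ∧ r i ≤ (e : ℤ)) (hs : ∀ i, 0 ≤ s i ∧ s i ≤ (e : ℤ))
    (α β : ZMod f → ℚ)
    (hα : ∀ i, α i = p * (∑ j ∈ Finset.range f, (p : ℚ) ^ (f - 1 - j) * r (i + (j : ZMod f))) /
      ((p : ℚ) ^ f - 1))
    (hβ : ∀ i, β i = p * (∑ j ∈ Finset.range f, (p : ℚ) ^ (f - 1 - j) * s (i + (j : ZMod f))) /
      ((p : ℚ) ^ f - 1))
    (hint : ∀ i, ∃ k : ℤ, β i - α i = k)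
    (n t : ZMod f → ℚ)
    (hn : ∀ i, n i = max 0 (β i - α i) / p)
    (ht : ∀ i, t i = r i + p * n i - n (i + 1)) :
    (∀ i, ∃ k : ℤ, n i = k) ∧ (∀ i, 0 ≤ t i ∧ t i ≤ (e : ℚ)) ∧
    (∀ i, p * (∑ j ∈ Finset.range f, (p : ℚ) ^ (f - 1 - j) * t (i + (j : ZMod f))) /
      ((p : ℚ) ^ f - 1) = max (α i) (β i)) := by
  obtain ⟨m, rfl⟩ : ∃ m, f = m + 1 := ⟨f - 1, by omega⟩
  have hp2 : (2 : ℚ) ≤ p := by exact_mod_cast hp.two_le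
  have hppos : (0 : ℚ) < p := by linarith
  have hN : (1 : ℚ) < (p:ℚ)^(m+1) := by
    calc (1:ℚ) < 2 := one_lt_two
    _ ≤ (p:ℚ) := hp2
    _ = (p:ℚ)^1 := (pow_one _).symm
    _ ≤ (p:ℚ)^(m+1) := pow_le_pow_right₀ (by linarith) (by omega)
  have hN0 : ((p:ℚ)^(m+1) - 1) ≠ 0 := by linarith
  have hme : m + 1 - 1 = m := rfl
  have hp0 : (p:ℚ) ≠ 0 := by positivity
  -- recurrences
  have hαrec : ∀ i, α (i+1) = p * (α i - r i) := by
    intro i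
    have h := aux_shift p m (fun k => (r k : ℚ)) i
    rw [hα, hα i]
    simp only [hme]
    field_simp
    linear_combination (-1 : ℚ) * h
  have hβrec : ∀ i, β (i+1) = p * (β i - s i) := by
    intro i
    have h := aux_shift p m (fun k => (s k : ℚ)) i
    rw [hβ, hβ i]
    simp only [hme]
    field_simp
    linear_combination (-1 : ℚ) * h
  have hδrec : ∀ i, β (i+1) - α (i+1) = p * ((β i - α i) + r i - s i) := by
    intro i; rw [hαrec, hβrec]; ring
  -- n facts
  have hpn : ∀ i, p * n i = max 0 (β i - α i) := by
    intro i; rw [hn i]; field_simp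
  have hn' : ∀ i, n (i+1) = max 0 (β i - α i + r i - s i) := by
    intro i
    rw [hn (i+1), hδrec i]
    rcases le_total (β i - α i + ↑(r i) - ↑(s i)) 0 with h | h
    · rw [max_eq_left (by nlinarith), max_eq_left h]; simp
    · rw [max_eq_right (by nlinarith), max_eq_right h]
      field_simp
  -- integrality
  have hnint : ∀ i, ∃ k : ℤ, n i = k := by
    intro i
    obtain ⟨k, hk⟩ := hint (i - 1)
    refine ⟨max 0 (k + r (i-1) - s (i-1)), ?_⟩
    have : i = (i - 1) + 1 := by ring
    rw [this, hn' (i-1), hk]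
    push_cast
    ring_nf
  -- bounds
  have hbounds : ∀ i, 0 ≤ t i ∧ t i ≤ (e : ℚ) := by
    intro i
    have h1 := hpn i
    have h2 := hn' i
    have hri := hr i
    have hsi := hs i
    have hri' : (0:ℚ) ≤ r i ∧ (r i : ℚ) ≤ e := by exact_mod_cast hri
    have hsi' : (0:ℚ) ≤ s i ∧ (s i : ℚ) ≤ e := by exact_mod_cast hsi
    have hti : t i = r i + max 0 (β i - α i) - max 0 (β i - α i + r i - s i) := by
      rw [ht i, h1, h2]
    rcases max_cases (0:ℚ) (β i - α i) with ⟨e1, l1⟩ | ⟨e1, l1⟩ <;>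
      rcases max_cases (0:ℚ) (β i - α i + r i - s i) with ⟨e2, l2⟩ | ⟨e2, l2⟩ <;>
      rw [e1, e2] at hti <;>
      exact ⟨by linarith [hri'.1, hsi'.1], by linarith [hri'.2, hsi'.2]⟩
  refine ⟨hnint, hbounds, ?_⟩
  -- gamma invariant
  have hγ : ∀ i, max (α i) (β i) = α i + p * n i := by
    intro i
    rw [hpn i]
    rcases le_total (α i) (β i) with h | h
    · rw [max_eq_right h, max_eq_right (by linarith)]; ring
    · rw [max_eq_left h, max_eq_left (by linarith)]; ring
  have hγrec : ∀ i, max (α (i+1)) (β (i+1)) = p * (max (α i) (β i) - t i) := by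
    intro i
    rw [hγ, hγ i, ht i, hαrec i]
    ring
  set Φ : ZMod (m+1) → ℚ := fun i =>
    p * (∑ j ∈ Finset.range (m+1), (p : ℚ) ^ (m+1 - 1 - j) * t (i + (j : ZMod (m+1)))) /
      ((p : ℚ) ^ (m+1) - 1) with hΦ
  have hΦrec : ∀ i, Φ (i+1) = p * (Φ i - t i) := by
    intro i
    have h := aux_shift p m t i
    simp only [hΦ, hme]
    field_simp
    linear_combination (-1 : ℚ) * h
  set d : ZMod (m+1) → ℚ := fun i => Φ i - max (α i) (β i) with hd
  have hdrec : ∀ i, d (i+1) = p * d i := by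
    intro i; simp only [hd]; rw [hΦrec i, hγrec i]; ring
  have hditer := aux_iter (m+1) p d hdrec (m+1)
  intro i
  have hz : i + ((m+1 : ℕ) : ZMod (m+1)) = i := by
    rw [ZMod.natCast_self, add_zero]
  have := hditer i
  rw [hz] at this
  have hd0 : d i = 0 := by
    rcases mul_eq_zero.mp (show ((p:ℚ)^(m+1) - 1) * d i = 0 by linarith) with h | h
    · exact absurd h hN0
    · exact h
  have : Φ i = max (α i) (β i) := by
    have := hd0; simp only [hd] at this; linarith
  simpa [hΦ, hme] using this
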